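/- For all natural numbers k and n, M(k,n) = (k+2)^(n+2). (This is Moessner's theorem expressed via the explicit arithmetic description of Moessner's sieve.) -/

import Mathlib

def gAux : ℕ → ℕ → ℕ → ℕ → ℕ
  | 0, i, x, n => i * (n + 2) + x + 1
  | m + 1, i, x, n =>
      (∑ a ∈ Finset.range (x + 1), gAux m i a n) +
        ∑ j ∈ Finset.range i, ∑ a ∈ Finset.range (n + 1 - m), gAux m j a n

def g (i m x n : ℕ) : ℕ := gAux m i x n

def Δ (i n : ℕ) : ℕ := ∑ m ∈ Finset.range (n + 1), ∑ x ∈ Finset.range (n + 1 - m), g i m x n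

def M (k n : ℕ) : ℕ := (k + 1) * (n + 2) + 1 + ∑ i ∈ Finset.range (k + 1), Δ i n

open Finset

lemma hockey (s c : ℕ) : ∀ x : ℕ, (∑ a ∈ range (x+1), Nat.choose (c+a+s) s) + Nat.choose (c+s) (s+1) = Nat.choose (c+x+s+1) (s+1)
  | 0 => by simp [Nat.choose_succ_succ']
  | x+1 => by
    rw [Finset.sum_range_succ, Nat.add_right_comm, hockey s c x, show c+(x+1)+s+1 = (c+x+s+1)+1 by ring,
      Nat.choose_succ_succ' (c+x+s+1) s]
    ring

lemma trinomial {n m s : ℕ} (hs : s ≤ m + 1) (hm : m ≤ n) :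
    Nat.choose (n+2) (m+1-s) * Nat.choose (n+1-m+s) (s+1) = Nat.choose (n+2) (m+2) * Nat.choose (m+2) (s+1) := by
  have h1 : Nat.choose (m+2) (m+1-s) = Nat.choose (m+2) (s+1) :=
    Nat.choose_symm_of_eq_add (by omega)
  have h2 := Nat.choose_mul (n := n+2) (k := m+2) (s := m+1-s) (by omega)
  rw [h1, show n+2-(m+1-s) = n+1-m+s by omega, show m+2-(m+1-s) = s+1 by omega] at h2
  exact h2.symm

lemma binom_tel (m : ℕ) (u : ℤ) :
    ∑ s ∈ range (m+2), (-1:ℤ)^s * Nat.choose (m+2) (s+1) * u^(m+1-s) = u^(m+2) - (u-1)^(m+2) := by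
  have hb : (u - 1)^(m+2) = ∑ t ∈ range (m+3), u^t * (-1:ℤ)^(m+2-t) * Nat.choose (m+2) t := by
    rw [sub_eq_add_neg]; exact add_pow u (-1) (m+2)
  have hb2 : (u - 1)^(m+2) = (∑ t ∈ range (m+2), u^t * (-1:ℤ)^(m+2-t) * Nat.choose (m+2) t) + u^(m+2) := by
    rw [hb, Finset.sum_range_succ]
    simp
  have hr : ∑ t ∈ range (m+2), u^t * (-1:ℤ)^(m+2-t) * Nat.choose (m+2) t
      = ∑ s ∈ range (m+2), u^(m+1-s) * (-1:ℤ)^(s+1) * Nat.choose (m+2) (s+1) := by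
    rw [← Finset.sum_range_reflect]
    apply Finset.sum_congr rfl
    intro s hs
    simp only [Finset.mem_range] at hs
    have e1 : m+2-1-s = m+1-s := by omega
    have h2 : m + 2 - (m+1-s) = s + 1 := by omega
    have h3 : Nat.choose (m+2) (m+1-s) = Nat.choose (m+2) (s+1) :=
      Nat.choose_symm_of_eq_add (by omega)
    rw [e1, h2, h3]
  have key : ∀ s ∈ range (m+2), u^(m+1-s) * (-1:ℤ)^(s+1) * Nat.choose (m+2) (s+1)
      = -((-1:ℤ)^s * Nat.choose (m+2) (s+1) * u^(m+1-s)) := by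
    intro s _
    rw [pow_succ]
    ring
  rw [hb2, hr, Finset.sum_congr rfl key, Finset.sum_neg_distrib]
  ring
open Finset

def gfZ (m i x n : ℕ) : ℤ :=
  ∑ s ∈ range (m+2), (-1:ℤ)^s * (Nat.choose (n+2) (m+1-s) : ℤ) * (Nat.choose (n+1-m-x+s-1) s : ℤ) * ((i:ℤ)+1)^(m+1-s)

lemma gfZ_diag (n m j : ℕ) (h : m ≤ n) :
    gfZ (m+1) j (n-m) n = (Nat.choose (n+2) (m+2) : ℤ) * ((j:ℤ)+1)^(m+2) := by
  unfold gfZ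
  rw [show m+1+2 = (m+2)+1 by ring, Finset.sum_range_succ']
  have h0 : ∀ s ∈ range (m+2), (-1:ℤ)^(s+1) * (Nat.choose (n+2) (m+1+1-(s+1)) : ℤ) * (Nat.choose (n+1-(m+1)-(n-m)+(s+1)-1) (s+1) : ℤ) * ((j:ℤ)+1)^(m+1+1-(s+1)) = 0 := by
    intro s _
    have e : n+1-(m+1)-(n-m)+(s+1)-1 = s := by omega
    rw [e, Nat.choose_succ_self]
    simp
  rw [Finset.sum_congr rfl h0]
  have e0 : n+1-(m+1)-(n-m)+0-1 = 0 := by omega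
  simp [e0]

lemma key (n m i x : ℕ) (h : x + m ≤ n) :
    (∑ a ∈ range (x+1), gfZ m i a n) + (Nat.choose (n+2) (m+2) : ℤ) * (i:ℤ)^(m+2) = gfZ (m+1) i x n := by
  set P : ℤ := (i:ℤ) + 1 with hP
  set C2 : ℤ := (Nat.choose (n+2) (m+2) : ℤ) with hC2
  -- step 1: swap sums
  have h1 : (∑ a ∈ range (x+1), gfZ m i a n)
      = ∑ s ∈ range (m+2), (-1:ℤ)^s * (Nat.choose (n+2) (m+1-s) : ℤ) *
          (∑ a ∈ range (x+1), (Nat.choose (n+1-m-a+s-1) s : ℤ)) * P^(m+1-s) := by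
    unfold gfZ
    rw [Finset.sum_comm]
    apply Finset.sum_congr rfl
    intro s _
    rw [← Finset.sum_mul, ← Finset.mul_sum]
  -- step 2: hockey stick per s
  have h2 : ∀ s : ℕ, (∑ a ∈ range (x+1), (Nat.choose (n+1-m-a+s-1) s : ℤ))
      = (Nat.choose (n+1-m+s) (s+1) : ℤ) - (Nat.choose (n-m-x+s) (s+1) : ℤ) := by
    intro s
    have hnat : (∑ a ∈ range (x+1), Nat.choose (n+1-m-a+s-1) s)
        = ∑ a ∈ range (x+1), Nat.choose ((n-m-x)+a+s) s := by
      rw [← Finset.sum_range_reflect]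
      apply Finset.sum_congr rfl
      intro a ha
      simp only [Finset.mem_range] at ha
      congr 1
      omega
    have hh := hockey s (n-m-x) x
    have e1 : n-m-x+x+s+1 = n+1-m+s := by omega
    rw [e1] at hh
    have hz := congrArg (Nat.cast : ℕ → ℤ) hnat
    have hhz := congrArg (Nat.cast : ℕ → ℤ) hh
    push_cast at hz hhz
    rw [hz]
    linarith
  -- step 3: split into A - B
  have h3 : (∑ a ∈ range (x+1), gfZ m i a n)
      = (∑ s ∈ range (m+2), (-1:ℤ)^s * (Nat.choose (n+2) (m+1-s) : ℤ) * (Nat.choose (n+1-m+s) (s+1) : ℤ) * P^(m+1-s))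
        - (∑ s ∈ range (m+2), (-1:ℤ)^s * (Nat.choose (n+2) (m+1-s) : ℤ) * (Nat.choose (n-m-x+s) (s+1) : ℤ) * P^(m+1-s)) := by
    rw [h1, ← Finset.sum_sub_distrib]
    apply Finset.sum_congr rfl
    intro s _
    rw [h2 s]
    ring
  -- step 4: sum A via trinomial and binom_tel
  have h4 : (∑ s ∈ range (m+2), (-1:ℤ)^s * (Nat.choose (n+2) (m+1-s) : ℤ) * (Nat.choose (n+1-m+s) (s+1) : ℤ) * P^(m+1-s))
      = C2 * (P^(m+2) - (i:ℤ)^(m+2)) := by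
    have htr : ∀ s ∈ range (m+2), (-1:ℤ)^s * (Nat.choose (n+2) (m+1-s) : ℤ) * (Nat.choose (n+1-m+s) (s+1) : ℤ) * P^(m+1-s)
        = C2 * ((-1:ℤ)^s * (Nat.choose (m+2) (s+1) : ℤ) * P^(m+1-s)) := by
      intro s hs
      simp only [Finset.mem_range] at hs
      have := trinomial (n := n) (m := m) (s := s) (by omega) (by omega)
      have hc := congrArg (Nat.cast : ℕ → ℤ) this
      push_cast at hc
      rw [hC2]
      linear_combination ((-1:ℤ)^s * P^(m+1-s)) * hc
    rw [Finset.sum_congr rfl htr, ← Finset.mul_sum, binom_tel m P]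
    have : P - 1 = (i:ℤ) := by rw [hP]; ring
    rw [this]
  -- step 5: gfZ (m+1) i x n decomposition
  have h5 : gfZ (m+1) i x n
      = C2 * P^(m+2)
        - (∑ s ∈ range (m+2), (-1:ℤ)^s * (Nat.choose (n+2) (m+1-s) : ℤ) * (Nat.choose (n-m-x+s) (s+1) : ℤ) * P^(m+1-s)) := by
    unfold gfZ
    rw [show m+1+2 = (m+2)+1 by ring, Finset.sum_range_succ']
    have hterm : ∀ s ∈ range (m+2), (-1:ℤ)^(s+1) * (Nat.choose (n+2) (m+1+1-(s+1)) : ℤ) * (Nat.choose (n+1-(m+1)-x+(s+1)-1) (s+1) : ℤ) * ((i:ℤ)+1)^(m+1+1-(s+1))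
        = -((-1:ℤ)^s * (Nat.choose (n+2) (m+1-s) : ℤ) * (Nat.choose (n-m-x+s) (s+1) : ℤ) * P^(m+1-s)) := by
      intro s hs
      simp only [Finset.mem_range] at hs
      have e1 : m+1+1-(s+1) = m+1-s := by omega
      have e2 : n+1-(m+1)-x+(s+1)-1 = n-m-x+s := by omega
      rw [e1, e2, pow_succ]
      ring
    rw [Finset.sum_congr rfl hterm, Finset.sum_neg_distrib]
    have e3 : n+1-(m+1)-x+0-1+0 = n+1-(m+1)-x+0-1 := by ring
    simp only [pow_zero, one_mul, Nat.choose_zero_right, Nat.cast_one, mul_one, Nat.add_sub_cancel]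
    rw [show m+1+1-0 = m+2 by omega, show m+1+1 = m+2 by ring]
    push_cast
    ring
  rw [h3, h4, h5]
  ring


lemma gfZ_def (m i x n : ℕ) : gfZ m i x n =
  ∑ s ∈ range (m+2), (-1:ℤ)^s * (Nat.choose (n+2) (m+1-s) : ℤ) * (Nat.choose (n+1-m-x+s-1) s : ℤ) * ((i:ℤ)+1)^(m+1-s) := rfl

lemma rowsum (n m j : ℕ) (hm : m ≤ n) :
    ∑ a ∈ range (n+1-m), gfZ m j a n
      = (Nat.choose (n+2) (m+2) : ℤ) * (((j:ℤ)+1)^(m+2) - (j:ℤ)^(m+2)) := by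
  have hk := key n m j (n-m) (by omega)
  rw [gfZ_diag n m j hm] at hk
  rw [show n+1-m = (n-m)+1 by omega]
  linarith

lemma gAux_eq (n : ℕ) : ∀ (m) (x i : ℕ), x + m ≤ n + 1 → ((gAux m i x n : ℕ) : ℤ) = gfZ m i x n := by
  intro m
  induction m with
  | zero =>
    intro x i hx
    simp only [gAux]
    rw [gfZ_def]
    rw [Finset.sum_range_succ, Finset.sum_range_one]
    have e1 : n+1-0-x+1-1 = n+1-x := by omega
    have e2 : n+1-0-x+0-1+0 = n+1-0-x+0-1 := rfl
    simp only [pow_zero, one_mul, Nat.choose_zero_right, Nat.cast_one, mul_one, pow_one,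
      Nat.choose_one_right, e1, Nat.choose_zero_right]
    rw [show (0:ℕ)+1-0 = 1 by rfl, show (0:ℕ)+1-1 = 0 by rfl]
    have hc : ((n+1-x : ℕ) : ℤ) = (n:ℤ) + 1 - (x:ℤ) := by
      have : x ≤ n + 1 := by omega
      push_cast [Nat.cast_sub this]
      ring
    push_cast [hc]
    simp only [Nat.choose_one_right, Nat.choose_zero_right]
    push_cast
    ring
  | succ m ih =>
    intro x i hx
    simp only [gAux]
    push_cast
    have hrec1 : ∀ a ∈ range (x+1), ((gAux m i a n : ℕ):ℤ) = gfZ m i a n := by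
      intro a ha
      simp only [Finset.mem_range] at ha
      exact ih a i (by omega)
    have hrec2 : ∀ j ∈ range i, (∑ a ∈ range (n+1-m), ((gAux m j a n : ℕ):ℤ))
        = (Nat.choose (n+2) (m+2) : ℤ) * (((j:ℤ)+1)^(m+2) - (j:ℤ)^(m+2)) := by
      intro j _
      rw [Finset.sum_congr rfl (fun a ha => by
        simp only [Finset.mem_range] at ha
        exact ih a j (by omega))]
      exact rowsum n m j (by omega)
    rw [Finset.sum_congr rfl hrec1, Finset.sum_congr rfl hrec2]
    have htel : ∑ j ∈ range i, (Nat.choose (n+2) (m+2) : ℤ) * (((j:ℤ)+1)^(m+2) - (j:ℤ)^(m+2))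
        = (Nat.choose (n+2) (m+2) : ℤ) * (i:ℤ)^(m+2) := by
      have hts := Finset.sum_range_sub (fun j => (Nat.choose (n+2) (m+2) : ℤ) * ((j:ℕ):ℤ)^(m+2)) i
      rw [Finset.sum_congr rfl (fun j _ => by push_cast; ring :
        ∀ j ∈ range i, (Nat.choose (n+2) (m+2) : ℤ) * (((j:ℤ)+1)^(m+2) - (j:ℤ)^(m+2))
          = (Nat.choose (n+2) (m+2) : ℤ) * (((j+1:ℕ):ℤ))^(m+2) - (Nat.choose (n+2) (m+2) : ℤ) * ((j:ℕ):ℤ)^(m+2)), hts]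
      simp
    rw [htel]
    exact key n m i x (by omega)

theorem moessner (k n : ℕ) : M k n = (k + 2) ^ (n + 2) := by
  have hz : ((M k n : ℕ) : ℤ) = ((k:ℤ)+2)^(n+2) := by
    unfold M Δ g
    push_cast
    have hin : ∀ i : ℕ, (∑ m ∈ range (n+1), ∑ x ∈ range (n+1-m), ((gAux m i x n : ℕ):ℤ))
        = ∑ m ∈ range (n+1), (Nat.choose (n+2) (m+2):ℤ) * (((i:ℤ)+1)^(m+2) - (i:ℤ)^(m+2)) := by
      intro i
      apply Finset.sum_congr rfl
      intro m hm
      simp only [Finset.mem_range] at hm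
      rw [Finset.sum_congr rfl (fun x hx => by
        simp only [Finset.mem_range] at hx
        exact gAux_eq n m x i (by omega))]
      exact rowsum n m i (by omega)
    rw [Finset.sum_congr rfl (fun i _ => hin i), Finset.sum_comm]
    have htel : ∀ m ∈ range (n+1), (∑ i ∈ range (k+1), (Nat.choose (n+2) (m+2):ℤ) * (((i:ℤ)+1)^(m+2) - (i:ℤ)^(m+2)))
        = (Nat.choose (n+2) (m+2):ℤ) * (((k:ℤ)+1))^(m+2) := by
      intro m _
      have hts := Finset.sum_range_sub (fun j => (Nat.choose (n+2) (m+2) : ℤ) * ((j:ℕ):ℤ)^(m+2)) (k+1)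
      rw [Finset.sum_congr rfl (fun j _ => by push_cast; ring :
        ∀ j ∈ range (k+1), (Nat.choose (n+2) (m+2) : ℤ) * (((j:ℤ)+1)^(m+2) - (j:ℤ)^(m+2))
          = (Nat.choose (n+2) (m+2) : ℤ) * (((j+1:ℕ):ℤ))^(m+2) - (Nat.choose (n+2) (m+2) : ℤ) * ((j:ℕ):ℤ)^(m+2)), hts]
      push_cast
      simp
    rw [Finset.sum_congr rfl htel]
    have hbin : ((k:ℤ)+2)^(n+2) = ∑ t ∈ range (n+3), ((k:ℤ)+1)^t * (Nat.choose (n+2) t : ℤ) := by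
      have := add_pow ((k:ℤ)+1) 1 (n+2)
      simp only [one_pow, mul_one] at this
      rw [show ((k:ℤ)+2) = ((k:ℤ)+1)+1 by ring, this]
    have hsplit : (∑ t ∈ range (n+3), ((k:ℤ)+1)^t * (Nat.choose (n+2) t : ℤ))
        = (∑ m ∈ range (n+1), ((k:ℤ)+1)^(m+2) * (Nat.choose (n+2) (m+2) : ℤ)) + (((k:ℤ)+1)*((n:ℤ)+2) + 1) := by
      rw [show n+3 = (n+1)+1+1 by ring, Finset.sum_range_succ', Finset.sum_range_succ']
      simp only [pow_zero, one_mul, Nat.choose_zero_right, Nat.cast_one, pow_one,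
        Nat.choose_one_right, show ∀ x:ℕ, x+1+1 = x+2 from fun x => rfl]
      push_cast
      simp only [Nat.choose_one_right]
      push_cast
      ring
    have hcomm : (∑ m ∈ range (n+1), (Nat.choose (n+2) (m+2):ℤ) * (((k:ℤ)+1))^(m+2))
        = ∑ m ∈ range (n+1), ((k:ℤ)+1)^(m+2) * (Nat.choose (n+2) (m+2) : ℤ) :=
      Finset.sum_congr rfl (fun m _ => mul_comm _ _)
    rw [hbin, hsplit, hcomm]
    push_cast
    ring
  have := hz
  push_cast at this
  exact_mod_cast this
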